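/- Let n ≥ m be positive integers and let r ≤ m. Let C ∈ ℝ^{n×m} and let W ∈ ℝ^{m×m} be symmetric positive semidefinite with eigenvalue decomposition W = V Σ Vᵀ, where V ∈ ℝ^{m×m} is orthogonal and Σ is diagonal with diagonal entries in descending order; let W_(r) = V_r Σ_r V_rᵀ be the best rank-r approximation of W formed from the top r eigenpairs. Let C = QR be a thin QR decomposition and let R W† Rᵀ = V' Σ' V'ᵀ be an eigenvalue decomposition with V' orthogonal and Σ' diagonal with descending diagonal entries, and set G_opt = (Q V'_r) Σ'_r (Q V'_r)ᵀ (the rank-r Nyström approximation via QR decomposition) and G_nys = C (W_(r))† Cᵀ (the standard rank-r Nyström approximation). Then ‖C W† Cᵀ − G_opt‖_F ≤ ‖C W† Cᵀ − G_nys‖_F. -/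

import Mathlib

open Matrix

/-- Frobenius norm of a real matrix. -/
noncomputable def frobNorm {a b : ℕ} (A : Matrix (Fin a) (Fin b) ℝ) : ℝ :=
  Real.sqrt (∑ i, ∑ j, (A i j) ^ 2)

/-- `Wd` is the Moore–Penrose pseudo-inverse of `W` (the four Penrose conditions). -/
def IsMoorePenrose {a : ℕ} (W Wd : Matrix (Fin a) (Fin a) ℝ) : Prop :=
  W * Wd * W = W ∧ Wd * W * Wd = Wd ∧ (W * Wd)ᵀ = W * Wd ∧ (Wd * W)ᵀ = Wd * W

/-! ### Auxiliary lemmas -/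

lemma nystromAux_ct_eq {a b : ℕ} (A : Matrix (Fin a) (Fin b) ℝ) : Aᴴ = Aᵀ := by
  ext i j; simp [conjTranspose_apply]

/-- Square of the Frobenius norm. -/
noncomputable def sqF {a b : ℕ} (A : Matrix (Fin a) (Fin b) ℝ) : ℝ := ∑ i, ∑ j, (A i j) ^ 2

lemma frobNorm_def {a b : ℕ} (A : Matrix (Fin a) (Fin b) ℝ) :
    frobNorm A = Real.sqrt (sqF A) := rfl

lemma sqF_nonneg {a b : ℕ} (A : Matrix (Fin a) (Fin b) ℝ) : 0 ≤ sqF A := by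
  apply Finset.sum_nonneg; intro i _; apply Finset.sum_nonneg; intro j _; positivity

lemma sqF_eq_trace {a b : ℕ} (A : Matrix (Fin a) (Fin b) ℝ) : sqF A = trace (Aᵀ * A) := by
  unfold sqF
  rw [trace, Finset.sum_comm]
  apply Finset.sum_congr rfl
  intro j _
  simp [diag, mul_apply, transpose_apply, pow_two]

lemma sqF_conj {a b : ℕ} (U : Matrix (Fin a) (Fin b) ℝ) (hU : Uᵀ * U = 1)
    (M : Matrix (Fin b) (Fin b) ℝ) : sqF (U * M * Uᵀ) = sqF M := by
  rw [sqF_eq_trace, sqF_eq_trace]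
  have h1 : (U * M * Uᵀ)ᵀ * (U * M * Uᵀ) = U * (Mᵀ * M) * Uᵀ := by
    simp only [transpose_mul, transpose_transpose, Matrix.mul_assoc]
    rw [← Matrix.mul_assoc Uᵀ U, hU, Matrix.one_mul]
  rw [h1, Matrix.trace_mul_cycle, ← Matrix.mul_assoc, hU, Matrix.one_mul]

lemma sqF_diagonal {a : ℕ} (v : Fin a → ℝ) :
    sqF (Matrix.diagonal v) = ∑ i, v i ^ 2 := by
  unfold sqF
  apply Finset.sum_congr rfl
  intro i _
  rw [Finset.sum_eq_single i]
  · rw [Matrix.diagonal_apply_eq]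
  · intro j _ hj
    rw [Matrix.diagonal_apply_ne _ (fun h => hj h.symm)]
    norm_num
  · intro h; exact absurd (Finset.mem_univ i) h

lemma mp_unique {a : ℕ} {W X Y : Matrix (Fin a) (Fin a) ℝ}
    (hX : IsMoorePenrose W X) (hY : IsMoorePenrose W Y) : X = Y := by
  obtain ⟨hX1, hX2, hX3, hX4⟩ := hX
  obtain ⟨hY1, hY2, hY3, hY4⟩ := hY
  have e1 : X * (W * X)ᵀ = X := by rw [hX3, ← mul_assoc, hX2]
  have e2 : (W * (Y * (W * X)))ᵀ = (W * X)ᵀ := by rw [← mul_assoc, ← mul_assoc, hY1]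
  have h1 : X = X * W * Y := by
    calc X = X * (W * X)ᵀ := e1.symm
    _ = X * (W * (Y * (W * X)))ᵀ := by rw [e2]
    _ = X * ((W * X)ᵀ * (W * Y)ᵀ) := by simp only [transpose_mul, mul_assoc]
    _ = X * ((W * X) * (W * Y)) := by rw [hX3, hY3]
    _ = (X * (W * X)) * (W * Y) := by simp only [mul_assoc]
    _ = X * (W * Y) := by rw [← mul_assoc X W X, hX2]
    _ = X * W * Y := (mul_assoc _ _ _).symm
  have e3 : (Y * W)ᵀ * Y = Y := by rw [hY4, hY2]
  have e5 : (Y * W) * (X * W) = Y * W := by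
    rw [mul_assoc, ← mul_assoc W X W, hX1]
  have h2 : Y = X * W * Y := by
    calc Y = (Y * W)ᵀ * Y := e3.symm
    _ = ((Y * W) * (X * W))ᵀ * Y := by rw [e5]
    _ = ((X * W)ᵀ * (Y * W)ᵀ) * Y := by rw [transpose_mul]
    _ = ((X * W) * (Y * W)) * Y := by rw [hX4, hY4]
    _ = (X * W) * ((Y * W) * Y) := by simp only [mul_assoc]
    _ = X * W * Y := by rw [hY2]
  rw [h1, ← h2]

lemma mp_symm {a : ℕ} {W Wd : Matrix (Fin a) (Fin a) ℝ}
    (hWsym : Wᵀ = W) (h : IsMoorePenrose W Wd) : Wdᵀ = Wd := by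
  obtain ⟨h1, h2, h3, h4⟩ := h
  have ht : IsMoorePenrose W Wdᵀ := by
    refine ⟨?_, ?_, ?_, ?_⟩
    · have := congrArg transpose h1
      simpa only [transpose_mul, hWsym, mul_assoc] using this
    · have := congrArg transpose h2
      simpa only [transpose_mul, hWsym, mul_assoc] using this
    · calc (W * Wdᵀ)ᵀ = Wd * Wᵀ := by simp [transpose_mul]
      _ = (Wd * W)ᵀ := by rw [hWsym, h4]
      _ = Wᵀ * Wdᵀ := by simp [transpose_mul]
      _ = W * Wdᵀ := by rw [hWsym]
    · calc (Wdᵀ * W)ᵀ = Wᵀ * Wd := by simp [transpose_mul]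
      _ = (W * Wd)ᵀ := by rw [hWsym, h3]
      _ = Wdᵀ * Wᵀ := by simp [transpose_mul]
      _ = Wdᵀ * W := by rw [hWsym]
  exact mp_unique ht ⟨h1, h2, h3, h4⟩

lemma filter_lt_eq_map {m r : ℕ} (hr : r ≤ m) :
    Finset.univ.filter (fun j : Fin m => (j : ℕ) < r) =
      Finset.univ.map (Fin.castLEEmb hr) := by
  ext j
  simp only [Finset.mem_filter, Finset.mem_univ, true_and, Finset.mem_map]
  constructor
  · intro h
    exact ⟨⟨(j : ℕ), h⟩, by ext; simp [Fin.castLEEmb]⟩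
  · rintro ⟨a, -, rfl⟩
    simp [Fin.castLEEmb]

lemma card_filter_lt {m r : ℕ} (hr : r ≤ m) :
    (Finset.univ.filter (fun j : Fin m => (j : ℕ) < r)).card = r := by
  rw [filter_lt_eq_map hr, Finset.card_map, Finset.card_univ, Fintype.card_fin]

lemma weight {m r : ℕ} (hr : r ≤ m) (c p : Fin m → ℝ)
    (hc : ∀ i j : Fin m, i ≤ j → c j ≤ c i) (hc0 : ∀ i, 0 ≤ c i)
    (hp0 : ∀ i, 0 ≤ p i) (hp1 : ∀ i, p i ≤ 1) (hps : ∑ i, p i ≤ (r : ℝ)) :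
    ∑ i, p i * c i ≤ ∑ i ∈ Finset.univ.filter (fun j : Fin m => (j : ℕ) < r), c i := by
  classical
  set F := Finset.univ.filter (fun j : Fin m => (j : ℕ) < r) with hF
  have hsplit : ∀ f : Fin m → ℝ, ∑ i ∈ F, f i + ∑ i ∈ Fᶜ, f i = ∑ i, f i := by
    intro f; exact Finset.sum_add_sum_compl F f
  rcases le_or_gt m r with hmr | hmr
  · have hFu : F = Finset.univ := by
      apply Finset.eq_univ_iff_forall.mpr
      intro j
      simp only [hF, Finset.mem_filter, Finset.mem_univ, true_and]
      exact lt_of_lt_of_le j.isLt hmr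
    rw [hFu]
    apply Finset.sum_le_sum
    intro i _
    nlinarith [hp0 i, hp1 i, hc0 i]
  · set t := c ⟨r, hmr⟩ with ht
    have hmemC : ∀ i ∈ Fᶜ, r ≤ (i : ℕ) := by
      intro i hi
      simp only [hF, Finset.mem_compl, Finset.mem_filter, Finset.mem_univ, true_and,
        not_lt] at hi
      exact hi
    have h1 : ∑ i ∈ Fᶜ, p i * c i ≤ t * ∑ i ∈ Fᶜ, p i := by
      rw [Finset.mul_sum]
      apply Finset.sum_le_sum
      intro i hi
      have hci : c i ≤ t := hc ⟨r, hmr⟩ i (by exact_mod_cast hmemC i hi)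
      nlinarith [hp0 i]
    have h2 : ∑ i ∈ Fᶜ, p i ≤ (r : ℝ) - ∑ i ∈ F, p i := by
      have := hsplit p; linarith
    have ht0 : 0 ≤ t := hc0 _
    have h3 : t * ∑ i ∈ Fᶜ, p i ≤ t * ((r : ℝ) - ∑ i ∈ F, p i) :=
      mul_le_mul_of_nonneg_left h2 ht0
    have hcard : (F.card : ℝ) = r := by rw [hF, card_filter_lt hr]
    have h4 : t * ((r : ℝ) - ∑ i ∈ F, p i) = ∑ i ∈ F, t * (1 - p i) := by
      rw [eq_comm]
      simp only [mul_sub, mul_one]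
      rw [Finset.sum_sub_distrib, Finset.sum_const, nsmul_eq_mul, hcard, ← Finset.mul_sum]
      ring
    have h5 : ∑ i ∈ F, (p i * c i + t * (1 - p i)) ≤ ∑ i ∈ F, c i := by
      apply Finset.sum_le_sum
      intro i hi
      have hir : (i : ℕ) < r := by
        simpa only [hF, Finset.mem_filter, Finset.mem_univ, true_and] using hi
      have hti : t ≤ c i := hc i ⟨r, hmr⟩ (le_of_lt (by exact_mod_cast hir))
      nlinarith [hp1 i]
    have := hsplit (fun i => p i * c i)
    rw [Finset.sum_add_distrib] at h5
    linarith

lemma key {m r : ℕ} (d : Fin m → ℝ)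
    (X : Matrix (Fin m) (Fin r) ℝ) (Y : Matrix (Fin r) (Fin m) ℝ)
    (hweight : ∀ p : Fin m → ℝ, (∀ i, 0 ≤ p i) → (∀ i, p i ≤ 1) → (∑ i, p i ≤ (r : ℝ)) →
      ∑ i, p i * d i ^ 2 ≤ ∑ i ∈ Finset.univ.filter (fun j : Fin m => (j : ℕ) < r), d i ^ 2) :
    ∑ i ∈ Finset.univ.filter (fun j : Fin m => r ≤ (j : ℕ)), d i ^ 2
      ≤ sqF (Matrix.diagonal d - X * Y) := by
  classical
  set cols : Fin r → EuclideanSpace ℝ (Fin m) := fun l => WithLp.toLp 2 (fun i => X i l) with hcols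
  set U : Submodule ℝ (EuclideanSpace ℝ (Fin m)) :=
    Submodule.span ℝ (Set.range cols) with hU
  have hk : Module.finrank ℝ U ≤ r := by
    simpa [Set.finrank] using finrank_range_le_card (R := ℝ) cols
  set k := Module.finrank ℝ U with hkdef
  set b := stdOrthonormalBasis ℝ U with hb
  set B : Matrix (Fin m) (Fin k) ℝ := fun i l => ((b l : EuclideanSpace ℝ (Fin m)) i) with hB
  have hBtB : Bᵀ * B = 1 := by
    ext l l'
    have horth := orthonormal_iff_ite.mp b.orthonormal l l'
    have hinner : (inner (𝕜 := ℝ) (b l) (b l') : ℝ)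
        = ∑ i, B i l * B i l' := by
      rw [Submodule.coe_inner]
      simp [PiLp.inner_apply, hB]; exact Finset.sum_congr rfl fun _ _ => mul_comm _ _
    rw [Matrix.mul_apply]
    simp only [transpose_apply]
    rw [← hinner, horth]
    simp [Matrix.one_apply]
  set P : Matrix (Fin m) (Fin m) ℝ := B * Bᵀ with hP
  have hPB : P * B = B := by rw [hP, Matrix.mul_assoc, hBtB, Matrix.mul_one]
  have hbspan : Submodule.span ℝ
      (Set.range (fun l => ((b l : EuclideanSpace ℝ (Fin m))))) = U := by
    have h1 : (fun l => ((b l : EuclideanSpace ℝ (Fin m)))) = (U.subtype ∘ b.toBasis) := by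
      funext l; simp
    rw [h1, Set.range_comp, ← Submodule.map_span, b.toBasis.span_eq, Submodule.map_subtype_top]
  have hPfix : ∀ v : EuclideanSpace ℝ (Fin m), v ∈ U →
      P *ᵥ (v : Fin m → ℝ) = (v : Fin m → ℝ) := by
    intro v hv
    rw [← hbspan] at hv
    induction hv using Submodule.span_induction with
    | mem x hx =>
        obtain ⟨l, rfl⟩ := hx
        funext i
        show ∑ j, P i j * B j l = B i l
        have h := congrFun (congrFun hPB i) l
        simpa [Matrix.mul_apply] using h
    | zero => show P *ᵥ (0 : Fin m → ℝ) = 0; simp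
    | add x y hx hy ihx ihy =>
        show P *ᵥ ((x : Fin m → ℝ) + y) = (x : Fin m → ℝ) + y
        rw [Matrix.mulVec_add, ihx, ihy]
    | smul a x hx ih =>
        show P *ᵥ (a • (x : Fin m → ℝ)) = a • (x : Fin m → ℝ)
        rw [Matrix.mulVec_smul, ih]
  have hPX : P * X = X := by
    ext i l
    have hm : cols l ∈ U := Submodule.subset_span ⟨l, rfl⟩
    have h := congrFun (hPfix (cols l) hm) i
    simpa [Matrix.mulVec, dotProduct, Matrix.mul_apply, hcols] using h
  have hPA : P * (X * Y) = X * Y := by rw [← Matrix.mul_assoc, hPX]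
  have hPsym : Pᵀ = P := by rw [hP, transpose_mul, transpose_transpose]
  have hPP : P * P = P := by
    rw [hP, Matrix.mul_assoc, ← Matrix.mul_assoc Bᵀ B Bᵀ, hBtB, Matrix.one_mul]
  have htr : ∑ j, P j j = (k : ℝ) := by
    have h1 : trace P = trace (Bᵀ * B) := Matrix.trace_mul_comm B Bᵀ
    rw [hBtB, Matrix.trace_one] at h1
    simpa [Matrix.trace, Matrix.diag] using h1
  have hp0 : ∀ j, 0 ≤ P j j := by
    intro j
    rw [hP, Matrix.mul_apply]
    apply Finset.sum_nonneg
    intro l _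
    simp only [transpose_apply]
    exact mul_self_nonneg _
  have hp1 : ∀ j, P j j ≤ 1 := by
    intro j
    have h := congrFun (congrFun hPP j) j
    have hsym : ∀ l, P l j = P j l := by
      intro l
      have := congrFun (congrFun hPsym l) j
      simpa [transpose_apply] using this.symm
    have hexp : (P * P) j j = ∑ l, (P j l) ^ 2 := by
      rw [Matrix.mul_apply]
      apply Finset.sum_congr rfl
      intro l _
      rw [hsym l, pow_two]
    rw [hexp] at h
    have hge : (P j j) ^ 2 ≤ ∑ l, (P j l) ^ 2 := by
      apply Finset.single_le_sum (f := fun l => (P j l) ^ 2)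
      · intro l _; positivity
      · exact Finset.mem_univ j
    nlinarith [hge, h]
  set D : Matrix (Fin m) (Fin m) ℝ := Matrix.diagonal d with hD
  set M : Matrix (Fin m) (Fin m) ℝ := D - X * Y with hM
  set Pc : Matrix (Fin m) (Fin m) ℝ := 1 - P with hPc
  have hPcsym : Pcᵀ = Pc := by rw [hPc, transpose_sub, transpose_one, hPsym]
  have hPcPc : Pc * Pc = Pc := by
    rw [hPc]
    simp only [Matrix.sub_mul, Matrix.mul_sub, Matrix.one_mul, Matrix.mul_one, hPP]
    abel
  have hsq : ∀ (S N : Matrix (Fin m) (Fin m) ℝ), Sᵀ = S → S * S = S →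
      sqF (S * N) = trace (Nᵀ * S * N) := by
    intro S N hS1 hS2
    rw [sqF_eq_trace]
    congr 1
    rw [transpose_mul, Matrix.mul_assoc, ← Matrix.mul_assoc Sᵀ S N, hS1, hS2,
      ← Matrix.mul_assoc]
  have hdecomp : sqF M = sqF (P * M) + sqF (Pc * M) := by
    rw [hsq P M hPsym hPP, hsq Pc M hPcsym hPcPc, sqF_eq_trace]
    rw [← Matrix.trace_add]
    congr 1
    have : Mᵀ * P * M + Mᵀ * Pc * M = Mᵀ * (P + Pc) * M := by
      rw [Matrix.mul_add, Matrix.add_mul]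
    rw [this, hPc]
    simp
  have hPcM : Pc * M = Pc * D := by
    rw [hPc, hM]
    simp only [Matrix.sub_mul, Matrix.mul_sub, Matrix.one_mul]
    rw [hPA]
    abel
  have hPcD : sqF (Pc * D) = (∑ j, d j ^ 2) - ∑ j, P j j * d j ^ 2 := by
    rw [hsq Pc D hPcsym hPcPc]
    have hDt : Dᵀ = D := by rw [hD, Matrix.diagonal_transpose]
    rw [hDt, hPc]
    have hexp : D * (1 - P) * D = D * D - D * P * D := by
      rw [Matrix.mul_sub, Matrix.mul_one, Matrix.sub_mul]
    rw [hexp, Matrix.trace_sub]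
    have hDD : trace (D * D) = ∑ j, d j ^ 2 := by
      rw [hD, Matrix.diagonal_mul_diagonal, Matrix.trace_diagonal]
      apply Finset.sum_congr rfl
      intro j _; rw [pow_two]
    have hDPD : trace (D * P * D) = ∑ j, P j j * d j ^ 2 := by
      rw [Matrix.trace]
      apply Finset.sum_congr rfl
      intro j _
      rw [Matrix.diag_apply, hD, Matrix.mul_diagonal, Matrix.diagonal_mul]
      ring
    rw [hDD, hDPD]
  have hfilters : Finset.univ.filter (fun j : Fin m => r ≤ (j : ℕ)) =
      Finset.univ.filter (fun j : Fin m => ¬ (j : ℕ) < r) := by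
    ext j; simp [not_lt]
  have hsum := Finset.sum_filter_add_sum_filter_not Finset.univ
    (fun j : Fin m => (j : ℕ) < r) (fun i => d i ^ 2)
  have hkr : ∑ j, P j j ≤ (r : ℝ) := by rw [htr]; exact_mod_cast hk
  have hw := hweight (fun j => P j j) hp0 hp1 hkr
  have hnn := sqF_nonneg (P * M)
  rw [hfilters]
  have h1 : sqF (Pc * M) ≤ sqF M := by rw [hdecomp]; linarith
  rw [hPcM, hPcD] at h1
  linarith

lemma trunc {m r : ℕ} (hr : r ≤ m) (V' S' : Matrix (Fin m) (Fin m) ℝ) (hdiag : S'.IsDiag)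
    (Vr' : Matrix (Fin m) (Fin r) ℝ)
    (hVr' : ∀ (i : Fin m) (j : Fin r), Vr' i j = V' i (Fin.castLE hr j))
    (Sr' : Matrix (Fin r) (Fin r) ℝ)
    (hSr' : ∀ i j : Fin r, Sr' i j = S' (Fin.castLE hr i) (Fin.castLE hr j)) :
    Vr' * Sr' * Vr'ᵀ =
      V' * Matrix.diagonal (fun x : Fin m => if (x : ℕ) < r then S' x x else 0) * V'ᵀ := by
  classical
  have hinj : Function.Injective (Fin.castLE hr) := Fin.castLE_injective hr
  ext i j
  have hL : ∀ l : Fin r, (Vr' * Sr') i l = Vr' i l * Sr' l l := by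
    intro l
    rw [Matrix.mul_apply]
    apply Finset.sum_eq_single l
    · intro k _ hk
      have h0 : Sr' k l = 0 := by
        rw [hSr']
        exact hdiag (fun h => hk (hinj h))
      rw [h0, mul_zero]
    · intro h; exact absurd (Finset.mem_univ l) h
  have hlhs : (Vr' * Sr' * Vr'ᵀ) i j = ∑ l : Fin r,
      V' i (Fin.castLE hr l) * S' (Fin.castLE hr l) (Fin.castLE hr l) * V' j (Fin.castLE hr l) := by
    rw [Matrix.mul_apply]
    apply Finset.sum_congr rfl
    intro l _
    rw [transpose_apply, hL l, hVr', hVr', hSr']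
  have hrhs : (V' * Matrix.diagonal (fun x : Fin m => if (x : ℕ) < r then S' x x else 0) * V'ᵀ) i j
      = ∑ l : Fin r,
      V' i (Fin.castLE hr l) * S' (Fin.castLE hr l) (Fin.castLE hr l) * V' j (Fin.castLE hr l) := by
    rw [Matrix.mul_apply]
    simp only [Matrix.mul_diagonal, transpose_apply]
    have hstep : ∀ k : Fin m, V' i k * (if (k : ℕ) < r then S' k k else 0) * V' j k
        = if (k : ℕ) < r then V' i k * S' k k * V' j k else 0 := by
      intro k; split_ifs <;> ring
    rw [Finset.sum_congr rfl (fun k _ => hstep k), ← Finset.sum_filter, filter_lt_eq_map hr,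
      Finset.sum_map]
    apply Finset.sum_congr rfl
    intro l _
    simp [Fin.castLEEmb]
  rw [hlhs, hrhs]

/-- the rank-`r` Nyström approximation via QR decomposition is at least as
close to `C W† Cᵀ` (in Frobenius norm) as the standard rank-`r` Nyström approximation
`C (W_(r))† Cᵀ`. -/
theorem nystrom_via_QR_beats_standard_nystrom
    {n m r : ℕ} (hn : 0 < n) (hm : 0 < m) (hmn : m ≤ n) (hr : r ≤ m)
    (C : Matrix (Fin n) (Fin m) ℝ) (W Wd : Matrix (Fin m) (Fin m) ℝ)
    (hW : W.PosSemidef) (hWd : IsMoorePenrose W Wd)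
    -- eigenvalue decomposition of W
    (V S : Matrix (Fin m) (Fin m) ℝ)
    (hVorth : V * Vᵀ = 1) (hSdiag : S.IsDiag)
    (hSdesc : ∀ i j : Fin m, i ≤ j → S j j ≤ S i i)
    (hWdec : W = V * S * Vᵀ)
    -- top-r truncation of the eigendecomposition of W
    (Vr : Matrix (Fin m) (Fin r) ℝ)
    (hVr : ∀ (i : Fin m) (j : Fin r), Vr i j = V i (Fin.castLE hr j))
    (Sr : Matrix (Fin r) (Fin r) ℝ)
    (hSr : ∀ i j : Fin r, Sr i j = S (Fin.castLE hr i) (Fin.castLE hr j))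
    -- Moore–Penrose pseudo-inverse of W_(r) = Vr Sr Vrᵀ
    (Wrd : Matrix (Fin m) (Fin m) ℝ) (hWrd : IsMoorePenrose (Vr * Sr * Vrᵀ) Wrd)
    -- thin QR decomposition of C
    (Q : Matrix (Fin n) (Fin m) ℝ) (R : Matrix (Fin m) (Fin m) ℝ)
    (hQR : C = Q * R) (hQ : Qᵀ * Q = 1) (hRtri : ∀ i j : Fin m, j < i → R i j = 0)
    -- eigenvalue decomposition of R W† Rᵀ
    (V' S' : Matrix (Fin m) (Fin m) ℝ)
    (hV' : V' * V'ᵀ = 1) (hS'diag : S'.IsDiag)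
    (hS'desc : ∀ i j : Fin m, i ≤ j → S' j j ≤ S' i i)
    (hEig : R * Wd * Rᵀ = V' * S' * V'ᵀ)
    -- top-r truncation of that eigendecomposition
    (Vr' : Matrix (Fin m) (Fin r) ℝ)
    (hVr' : ∀ (i : Fin m) (j : Fin r), Vr' i j = V' i (Fin.castLE hr j))
    (Sr' : Matrix (Fin r) (Fin r) ℝ)
    (hSr' : ∀ i j : Fin r, Sr' i j = S' (Fin.castLE hr i) (Fin.castLE hr j)) :
    frobNorm (C * Wd * Cᵀ - (Q * Vr') * Sr' * (Q * Vr')ᵀ) ≤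
      frobNorm (C * Wd * Cᵀ - C * Wrd * Cᵀ) := by
  classical
  have hV'o : V'ᵀ * V' = 1 := mul_eq_one_comm.mp hV'
  have hWsym : Wᵀ = W := by rw [← nystromAux_ct_eq]; exact hW.1
  have hWdsym : Wdᵀ = Wd := mp_symm hWsym hWd
  have hWdpsd : Wd.PosSemidef := by
    have h := hW.conjTranspose_mul_mul_same Wd
    rw [nystromAux_ct_eq, hWdsym] at h
    rwa [hWd.2.1] at h
  have hMpsd : (R * Wd * Rᵀ).PosSemidef := by
    have h := hWdpsd.mul_mul_conjTranspose_same R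
    rwa [nystromAux_ct_eq] at h
  have hS'eq : V'ᵀ * (R * Wd * Rᵀ) * V' = S' := by
    rw [hEig]
    calc V'ᵀ * (V' * S' * V'ᵀ) * V' = V'ᵀ * V' * (S' * (V'ᵀ * V')) := by
          simp only [Matrix.mul_assoc]
    _ = S' := by rw [hV'o, Matrix.one_mul, Matrix.mul_one]
  have hS'psd : S'.PosSemidef := by
    have h := hMpsd.conjTranspose_mul_mul_same V'
    rw [nystromAux_ct_eq] at h
    rwa [hS'eq] at h
  have hd0 : ∀ j, 0 ≤ S' j j := by
    intro j
    exact hS'psd.diag_nonneg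
  have hUqo : (Q * V')ᵀ * (Q * V') = 1 := by
    calc (Q * V')ᵀ * (Q * V') = V'ᵀ * (Qᵀ * Q) * V' := by
          rw [transpose_mul]; simp only [Matrix.mul_assoc]
    _ = 1 := by rw [hQ, Matrix.mul_one, hV'o]
  have hCWd : C * Wd * Cᵀ = (Q * V') * S' * (Q * V')ᵀ := by
    rw [hQR]
    calc Q * R * Wd * (Q * R)ᵀ = Q * (R * Wd * Rᵀ) * Qᵀ := by
          rw [transpose_mul]; simp only [Matrix.mul_assoc]
    _ = Q * (V' * S' * V'ᵀ) * Qᵀ := by rw [hEig]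
    _ = (Q * V') * S' * (Q * V')ᵀ := by
          rw [transpose_mul]; simp only [Matrix.mul_assoc]
  have htrunc := trunc hr V' S' hS'diag Vr' hVr' Sr' hSr'
  have hGopt : (Q * Vr') * Sr' * (Q * Vr')ᵀ
      = (Q * V') * Matrix.diagonal (fun x : Fin m => if (x : ℕ) < r then S' x x else 0)
        * (Q * V')ᵀ := by
    calc (Q * Vr') * Sr' * (Q * Vr')ᵀ = Q * (Vr' * Sr' * Vr'ᵀ) * Qᵀ := by
          rw [transpose_mul]; simp only [Matrix.mul_assoc]
    _ = Q * (V' * Matrix.diagonal (fun x : Fin m => if (x : ℕ) < r then S' x x else 0)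
          * V'ᵀ) * Qᵀ := by rw [htrunc]
    _ = _ := by rw [transpose_mul]; simp only [Matrix.mul_assoc]
  have hCWrd : C * Wrd * Cᵀ = (Q * V') * (V'ᵀ * (R * Wrd * Rᵀ) * V') * (Q * V')ᵀ := by
    rw [hQR]
    calc Q * R * Wrd * (Q * R)ᵀ = Q * (R * Wrd * Rᵀ) * Qᵀ := by
          rw [transpose_mul]; simp only [Matrix.mul_assoc]
    _ = Q * (V' * (V'ᵀ * (R * Wrd * Rᵀ) * V') * V'ᵀ) * Qᵀ := by
          have h2 : V' * (V'ᵀ * (R * Wrd * Rᵀ) * V') * V'ᵀ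
              = (V' * V'ᵀ) * ((R * Wrd * Rᵀ) * (V' * V'ᵀ)) := by
            simp only [Matrix.mul_assoc]
          rw [h2, hV', Matrix.mul_one, Matrix.one_mul]
    _ = _ := by rw [transpose_mul]; simp only [Matrix.mul_assoc]
  have hSrT : Srᵀ = Sr := by
    ext i j
    rw [transpose_apply, hSr, hSr]
    rcases eq_or_ne i j with rfl | hne
    · rfl
    · have h1 : Fin.castLE hr j ≠ Fin.castLE hr i :=
        fun h => hne ((Fin.castLE_injective hr) h).symm
      have h2 : Fin.castLE hr i ≠ Fin.castLE hr j :=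
        fun h => hne ((Fin.castLE_injective hr) h)
      rw [hSdiag h1, hSdiag h2]
  have hfact : Wrd = Vr * Sr * Vrᵀ * Wrdᵀ * Wrd := by
    obtain ⟨g1, g2, g3, g4⟩ := hWrd
    calc Wrd = Wrd * (Vr * Sr * Vrᵀ) * Wrd := g2.symm
    _ = (Wrd * (Vr * Sr * Vrᵀ))ᵀ * Wrd := by rw [g4]
    _ = Vr * Sr * Vrᵀ * Wrdᵀ * Wrd := by
        simp only [transpose_mul, transpose_transpose, hSrT, Matrix.mul_assoc]
  have hXY : V'ᵀ * (R * Wrd * Rᵀ) * V'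
      = (V'ᵀ * R * Vr) * (Sr * Vrᵀ * Wrdᵀ * Wrd * Rᵀ * V') := by
    conv_lhs => rw [hfact]
    simp only [Matrix.mul_assoc]
  have hL : frobNorm (C * Wd * Cᵀ - (Q * Vr') * Sr' * (Q * Vr')ᵀ)
      = Real.sqrt (sqF (S' -
        Matrix.diagonal (fun x : Fin m => if (x : ℕ) < r then S' x x else 0))) := by
    rw [hCWd, hGopt, ← Matrix.sub_mul, ← Matrix.mul_sub, frobNorm_def, sqF_conj _ hUqo]
  have hR2 : frobNorm (C * Wd * Cᵀ - C * Wrd * Cᵀ)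
      = Real.sqrt (sqF (S' - V'ᵀ * (R * Wrd * Rᵀ) * V')) := by
    rw [hCWd, hCWrd, ← Matrix.sub_mul, ← Matrix.mul_sub, frobNorm_def, sqF_conj _ hUqo]
  rw [hL, hR2]
  apply Real.sqrt_le_sqrt
  have hdd : S' - Matrix.diagonal (fun x : Fin m => if (x : ℕ) < r then S' x x else 0)
      = Matrix.diagonal (fun x : Fin m => if r ≤ (x : ℕ) then S'.diag x else 0) := by
    ext i j
    rcases eq_or_ne i j with rfl | hne
    · simp only [Matrix.sub_apply, Matrix.diagonal_apply_eq, Matrix.diag_apply]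
      rcases lt_or_ge (i : ℕ) r with h | h
      · rw [if_pos h, if_neg (not_le.mpr h), sub_self]
      · rw [if_neg (not_lt.mpr h), if_pos h, sub_zero]
    · simp only [Matrix.sub_apply, Matrix.diagonal_apply_ne _ hne, hS'diag hne, sub_zero]
  have hgoal2 : S' - V'ᵀ * (R * Wrd * Rᵀ) * V'
      = Matrix.diagonal S'.diag - (V'ᵀ * R * Vr) * (Sr * Vrᵀ * Wrdᵀ * Wrd * Rᵀ * V') := by
    rw [hXY]
    conv_lhs => rw [← hS'diag.diagonal_diag]
  rw [hdd, hgoal2, sqF_diagonal]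
  have hlhsval : (∑ i : Fin m, (if r ≤ (i : ℕ) then S'.diag i else 0) ^ 2)
      = ∑ i ∈ Finset.univ.filter (fun j : Fin m => r ≤ (j : ℕ)), (S'.diag i) ^ 2 := by
    rw [Finset.sum_filter]
    apply Finset.sum_congr rfl
    intro i _
    split_ifs
    · rfl
    · norm_num
  rw [hlhsval]
  have hc : ∀ i j : Fin m, i ≤ j → (S'.diag j) ^ 2 ≤ (S'.diag i) ^ 2 := by
    intro i j hij
    have h1 := hS'desc i j hij
    have h2 := hd0 j
    have h3 := hd0 i
    simp only [Matrix.diag_apply]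
    nlinarith
  have hc0 : ∀ i, (0 : ℝ) ≤ (S'.diag i) ^ 2 := fun i => sq_nonneg _
  exact key S'.diag _ _
    (fun p hp0 hp1 hps => weight hr (fun j => (S'.diag j) ^ 2) p hc hc0 hp0 hp1 hps)
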